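/- Given two Gaussian possibility functions N̄(μ, Σ) and N̄(μ̃, Σ̃) on ℝⁿ with Σ, Σ̃ positive definite, the affine map M(x) = μ̃ + T(x - μ) with T = Σ̃^{1/2}(Σ^{1/2})⁻¹ (Cholesky factors) pushes N̄(μ, Σ) forward to N̄(μ̃, Σ̃); i.e., for all z, sup{exp(-(1/2)(x-μ)ᵀΣ⁻¹(x-μ)) : M(x) = z} = exp(-(1/2)(z-μ̃)ᵀΣ̃⁻¹(z-μ̃)). -/
import Mathlib


open Matrix

/-- The Gaussian possibility function on ℝⁿ with parameters μ and Σ. -/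
noncomputable def gaussPoss {n : ℕ} (μ : Fin n → ℝ) (S : Matrix (Fin n) (Fin n) ℝ)
    (θ : Fin n → ℝ) : ℝ :=
  Real.exp (-(1/2) * ((θ - μ) ⬝ᵥ (S⁻¹ *ᵥ (θ - μ))))

/-- the affine map M(x) = μ̃ + T(x - μ), with T = Σ̃^{1/2}(Σ^{1/2})⁻¹ built from
Cholesky factors, pushes N̄(μ, Σ) forward to N̄(μ̃, Σ̃). -/
theorem gaussPoss_transport_map {n : ℕ} (μ μt : Fin n → ℝ)
    (S St L Lt : Matrix (Fin n) (Fin n) ℝ)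
    (hS : S.PosDef) (hSt : St.PosDef)
    -- L is the Cholesky factor of S: lower triangular, positive diagonal, S = L Lᵀ
    (hLlow : ∀ i j : Fin n, i < j → L i j = 0) (hLdiag : ∀ i : Fin n, 0 < L i i)
    (hL : L * Lᵀ = S)
    -- Lt is the Cholesky factor of St
    (hLtlow : ∀ i j : Fin n, i < j → Lt i j = 0) (hLtdiag : ∀ i : Fin n, 0 < Lt i i)
    (hLt : Lt * Ltᵀ = St) :
    ∀ z : Fin n → ℝ,
      (⨆ x ∈ {x : Fin n → ℝ | μt + (Lt * L⁻¹) *ᵥ (x - μ) = z}, gaussPoss μ S x)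
        = gaussPoss μt St z := by
  intro z
  -- invertibility of L and Lt
  have hdetS : S.det ≠ 0 := ne_of_gt hS.det_pos
  have hdetSt : St.det ≠ 0 := ne_of_gt hSt.det_pos
  have hdetL : IsUnit L.det := by
    refine isUnit_iff_ne_zero.2 fun h => hdetS ?_
    rw [← hL, det_mul, det_transpose, h, mul_zero]
  have hdetLt : IsUnit Lt.det := by
    refine isUnit_iff_ne_zero.2 fun h => hdetSt ?_
    rw [← hLt, det_mul, det_transpose, h, mul_zero]
  have hLL : L * L⁻¹ = 1 := mul_nonsing_inv _ hdetL
  have hLL' : L⁻¹ * L = 1 := nonsing_inv_mul _ hdetL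
  have hLtLt : Lt * Lt⁻¹ = 1 := mul_nonsing_inv _ hdetLt
  have hLtLt' : Lt⁻¹ * Lt = 1 := nonsing_inv_mul _ hdetLt
  set x₀ : Fin n → ℝ := μ + (L * Lt⁻¹) *ᵥ (z - μt) with hx₀
  have hTT : (Lt * L⁻¹) * (L * Lt⁻¹) = 1 := by
    rw [mul_assoc, ← mul_assoc L⁻¹, hLL', one_mul, hLtLt]
  have hTT' : (L * Lt⁻¹) * (Lt * L⁻¹) = 1 := by
    rw [mul_assoc, ← mul_assoc Lt⁻¹, hLtLt', one_mul, hLL]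
  -- the fiber is a singleton
  have hset : {x : Fin n → ℝ | μt + (Lt * L⁻¹) *ᵥ (x - μ) = z} = {x₀} := by
    ext x
    simp only [Set.mem_setOf_eq, Set.mem_singleton_iff]
    constructor
    · intro h
      have h1 : (Lt * L⁻¹) *ᵥ (x - μ) = z - μt := by
        rw [← h]; abel
      have h2 : (L * Lt⁻¹) *ᵥ ((Lt * L⁻¹) *ᵥ (x - μ)) = (L * Lt⁻¹) *ᵥ (z - μt) := by
        rw [h1]
      rw [mulVec_mulVec, hTT', one_mulVec] at h2
      rw [hx₀, ← h2]; abel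
    · intro h
      rw [h, hx₀]
      have : (μ + (L * Lt⁻¹) *ᵥ (z - μt)) - μ = (L * Lt⁻¹) *ᵥ (z - μt) := by abel
      rw [this, mulVec_mulVec, hTT, one_mulVec]
      abel
  rw [hset]
  -- value at x₀ equals target
  have haux : ∀ (A : Matrix (Fin n) (Fin n) ℝ) (v u : Fin n → ℝ),
      (A *ᵥ v) ⬝ᵥ u = v ⬝ᵥ (Aᵀ *ᵥ u) := by
    intro A v u
    rw [dotProduct_mulVec, vecMul_transpose]
  have hval : gaussPoss μ S x₀ = gaussPoss μt St z := by
    unfold gaussPoss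
    congr 1
    congr 1
    have hdiff : x₀ - μ = (L * Lt⁻¹) *ᵥ (z - μt) := by rw [hx₀]; abel
    rw [hdiff]
    have hSinv : S⁻¹ = Lᵀ⁻¹ * L⁻¹ := by
      rw [← hL, Matrix.mul_inv_rev]
    have hStinv : St⁻¹ = Ltᵀ⁻¹ * Lt⁻¹ := by
      rw [← hLt, Matrix.mul_inv_rev]
    have hmat : (L * Lt⁻¹)ᵀ * (Lᵀ⁻¹ * L⁻¹) * (L * Lt⁻¹) = Ltᵀ⁻¹ * Lt⁻¹ := by
      rw [transpose_mul, transpose_nonsing_inv]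
      have h1 : Ltᵀ⁻¹ * Lᵀ * (Lᵀ⁻¹ * L⁻¹) = Ltᵀ⁻¹ * L⁻¹ := by
        rw [mul_assoc, ← mul_assoc Lᵀ, mul_nonsing_inv _ (by rwa [det_transpose]),
          one_mul]
      rw [h1, mul_assoc, ← mul_assoc L⁻¹, hLL', one_mul]
    rw [hSinv, hStinv, haux, mulVec_mulVec, mulVec_mulVec, hmat]
  -- sup over singleton
  have hb : ∀ x : Fin n → ℝ, (⨆ _ : x ∈ ({x₀} : Set (Fin n → ℝ)), gaussPoss μ S x)
      ≤ gaussPoss μt St z := by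
    intro x
    rcases eq_or_ne x x₀ with h | h
    · subst h
      rw [ciSup_pos (Set.mem_singleton _), hval]
    · have : IsEmpty (x ∈ ({x₀} : Set (Fin n → ℝ))) := ⟨fun hx => h hx⟩
      rw [Real.iSup_of_isEmpty]
      exact le_of_lt (by unfold gaussPoss; exact Real.exp_pos _)
  refine le_antisymm (ciSup_le hb) ?_
  have h2 : gaussPoss μt St z
      = ⨆ _ : x₀ ∈ ({x₀} : Set (Fin n → ℝ)), gaussPoss μ S x₀ := by
    rw [ciSup_pos (Set.mem_singleton _), hval]
  rw [h2]
  exact le_ciSup ⟨gaussPoss μt St z, Set.forall_mem_range.2 hb⟩ x₀
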